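/- arXiv:0806.2057 — 4 statements merged into one kernel-verified Lean document; each statement's English description precedes it below -/
import Mathlib

section
/- If X is a base of a simply laced root system Φ (i.e., X ⊆ Φ is linearly independent, pairwise inner products of distinct elements of X are ≤ 0, and every element of Φ is an integer linear combination of X), then the set of integer linear combinations of X having norm √2 is exactly Φ. -/
open RealInnerProductSpace

variable {E : Type*} [NormedAddCommGroup E] [InnerProductSpace ℝ E]

/-- A simply laced root system: a nonempty finite set of vectors with `⟪x,x⟫ = 2`,
integer pairwise inner products, closed under `x ↦ x - ⟪x,y⟫ y`. -/
def IsSLRS (Φ : Set E) : Prop :=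
  Φ.Nonempty ∧ Φ.Finite ∧
    ∀ x ∈ Φ, ∀ y ∈ Φ,
      ⟪x, x⟫ = 2 ∧ (∃ m : ℤ, ⟪x, y⟫ = (m : ℝ)) ∧ x - ⟪x, y⟫ • y ∈ Φ

/-- A base of a simply laced root system: a linearly independent subset with nonpositive
inner products between distinct elements, whose integer span contains `Φ`. -/
def IsBase (Φ X : Set E) : Prop :=
  X ⊆ Φ ∧ LinearIndependent ℝ ((↑) : X → E) ∧
    (∀ x ∈ X, ∀ y ∈ X, x ≠ y → ⟪x, y⟫ ≤ 0) ∧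
    ∀ v ∈ Φ, v ∈ Submodule.span ℤ X

section Aux

variable {Φ : Set E}

lemma slrs_norm (hΦ : IsSLRS Φ) {x : E} (hx : x ∈ Φ) : ⟪x, x⟫ = 2 :=
  (hΦ.2.2 x hx x hx).1

lemma slrs_neg_mem (hΦ : IsSLRS Φ) {x : E} (hx : x ∈ Φ) : -x ∈ Φ := by
  have h := (hΦ.2.2 x hx x hx).2.2
  rw [slrs_norm hΦ hx] at h
  have : x - (2 : ℝ) • x = -x := by
    rw [two_smul]; abel
  rwa [this] at h

lemma slrs_add_mem (hΦ : IsSLRS Φ) {x y : E} (hx : x ∈ Φ) (hy : y ∈ Φ)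
    (hxy : ⟪x, y⟫ = -1) : x + y ∈ Φ := by
  have h := (hΦ.2.2 x hx y hy).2.2
  rwa [hxy, neg_one_smul, sub_neg_eq_add] at h

lemma inner_list_sum (l : List E) (v : E) :
    ⟪l.sum, v⟫ = (l.map fun x => ⟪x, v⟫).sum := by
  induction l with
  | nil => simp
  | cons a t ih => simp [inner_add_left, ih]

lemma inner_list_sum' (l : List E) (v : E) :
    ⟪v, l.sum⟫ = (l.map fun x => ⟪v, x⟫).sum := by
  induction l with
  | nil => simp
  | cons a t ih => simp [inner_add_right, ih]

lemma list_sum_int (l : List ℝ) (h : ∀ r ∈ l, ∃ m : ℤ, r = (m : ℝ)) :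
    ∃ m : ℤ, l.sum = (m : ℝ) := by
  induction l with
  | nil => exact ⟨0, by simp⟩
  | cons a t ih =>
    obtain ⟨m, hm⟩ := h a (by simp)
    obtain ⟨k, hk⟩ := ih (fun r hr => h r (by simp [hr]))
    exact ⟨m + k, by simp [hm, hk]⟩

lemma list_sum_nonpos (l : List ℝ) (h : ∀ r ∈ l, r ≤ 0) : l.sum ≤ 0 := by
  induction l with
  | nil => simp
  | cons a t ih =>
    have := h a (by simp)
    have := ih (fun r hr => h r (by simp [hr]))
    simp only [List.sum_cons]
    linarith

lemma list_neg_sum (l : List E) : (l.map Neg.neg).sum = -l.sum := by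
  induction l with
  | nil => simp
  | cons a t ih => simp [ih]; abel

/-- Key induction: a norm-2 sum of roots is a root. -/
lemma slrs_key (hΦ : IsSLRS Φ) :
    ∀ n (l : List E), l.length ≤ n → (∀ x ∈ l, x ∈ Φ) → ⟪l.sum, l.sum⟫ = 2 →
      l.sum ∈ Φ := by
  intro n
  induction n with
  | zero =>
    intro l hl _ hsum
    rw [List.length_eq_zero_iff.mp (Nat.le_zero.mp hl)] at hsum
    simp at hsum
  | succ n ih =>
    intro l hl hmem hsum
    classical
    set v := l.sum with hv
    -- find x ∈ l with ⟪x, v⟫ > 0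
    have hex : ∃ x ∈ l, 0 < ⟪x, v⟫ := by
      by_contra hc
      push_neg at hc
      have h1 : (l.map fun x => ⟪x, v⟫).sum ≤ 0 := by
        apply list_sum_nonpos
        intro r hr
        obtain ⟨x, hxl, rfl⟩ := List.mem_map.mp hr
        exact hc x hxl
      rw [← inner_list_sum, ← hv, hsum] at h1
      linarith
    obtain ⟨x, hxl, hxv⟩ := hex
    have hxΦ : x ∈ Φ := hmem x hxl
    have hxx : ⟪x, x⟫ = 2 := slrs_norm hΦ hxΦ
    -- ⟪x, v⟫ is an integer
    have hint : ∃ m : ℤ, ⟪x, v⟫ = (m : ℝ) := by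
      rw [hv, inner_list_sum']
      apply list_sum_int
      intro r hr
      obtain ⟨y, hyl, rfl⟩ := List.mem_map.mp hr
      exact (hΦ.2.2 x hxΦ y (hmem y hyl)).2.1
    obtain ⟨k, hk⟩ := hint
    have hk1 : 1 ≤ k := by
      have : (0 : ℝ) < (k : ℝ) := hk ▸ hxv
      exact_mod_cast this
    rcases eq_or_lt_of_le hk1 with h1 | h2
    · -- k = 1 : induct on v - x
      have hkv : ⟪x, v⟫ = 1 := by rw [hk, ← h1]; norm_num
      set l' := l.erase x with hl'
      have hperm : List.Perm l (x :: l') := List.perm_cons_erase hxl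
      have hsum' : v = x + l'.sum := by
        rw [hv, hperm.sum_eq, List.sum_cons]
      have hlen : l'.length ≤ n := by
        have := hperm.length_eq
        simp at this
        omega
      have hmem' : ∀ y ∈ l', y ∈ Φ := fun y hy => hmem y (List.mem_of_mem_erase hy)
      have hv' : l'.sum = v - x := by rw [hsum']; abel
      have hvx : ⟪v, x⟫ = 1 := by rw [real_inner_comm]; exact hkv
      have hnorm' : ⟪l'.sum, l'.sum⟫ = 2 := by
        rw [hv', inner_sub_sub_self, hsum, hxx]
        linarith
      have hw : l'.sum ∈ Φ := ih l' hlen hmem' hnorm'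
      have hwx : ⟪l'.sum, x⟫ = -1 := by
        rw [hv', inner_sub_left, hxx]
        linarith
      have := slrs_add_mem hΦ hw hxΦ hwx
      rwa [hv', sub_add_cancel] at this
    · -- k ≥ 2 : v = x
      have h2' : (2 : ℝ) ≤ ⟪x, v⟫ := by rw [hk]; exact_mod_cast h2
      have hvx2 : (2:ℝ) ≤ ⟪v, x⟫ := by rw [real_inner_comm]; exact h2'
      have hzero : ⟪v - x, v - x⟫ ≤ 0 := by
        rw [inner_sub_sub_self, hsum, hxx]
        linarith
      have : v - x = 0 := by
        have hnn := real_inner_self_nonneg (x := v - x)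
        have : ⟪v - x, v - x⟫ = 0 := le_antisymm hzero hnn
        exact inner_self_eq_zero.mp this
      have : v = x := by rwa [sub_eq_zero] at this
      rw [this]; exact hxΦ

/-- Every element of the ℤ-span of Φ is a sum of a list of elements of Φ. -/
lemma slrs_span_list (hΦ : IsSLRS Φ) {v : E} (hv : v ∈ Submodule.span ℤ Φ) :
    ∃ l : List E, (∀ x ∈ l, x ∈ Φ) ∧ l.sum = v := by
  let S : AddSubgroup E :=
    { carrier := {v | ∃ l : List E, (∀ x ∈ l, x ∈ Φ) ∧ l.sum = v}
      zero_mem' := ⟨[], by simp, by simp⟩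
      add_mem' := by
        rintro a b ⟨la, hla, rfl⟩ ⟨lb, hlb, rfl⟩
        exact ⟨la ++ lb, by
          intro x hx
          rcases List.mem_append.mp hx with h | h
          · exact hla x h
          · exact hlb x h, by simp⟩
      neg_mem' := by
        rintro a ⟨la, hla, rfl⟩
        exact ⟨la.map Neg.neg, by
          intro x hx
          obtain ⟨y, hy, rfl⟩ := List.mem_map.mp hx
          exact slrs_neg_mem hΦ (hla y hy), list_neg_sum la⟩ }
  have hle : Submodule.span ℤ Φ ≤ AddSubgroup.toIntSubmodule S := by
    rw [Submodule.span_le]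
    intro x hx
    exact ⟨[x], fun y hy => by simp at hy; rwa [hy], by simp⟩
  exact hle hv

end Aux

theorem base_generates {Φ X : Set E} (hΦ : IsSLRS Φ) (hX : IsBase Φ X) :
    {v : E | v ∈ Submodule.span ℤ X ∧ ⟪v, v⟫ = 2} = Φ := by
  ext v
  constructor
  · rintro ⟨hspan, hnorm⟩
    have hsub : Submodule.span ℤ X ≤ Submodule.span ℤ Φ :=
      Submodule.span_mono hX.1
    obtain ⟨l, hlmem, hlsum⟩ := slrs_span_list hΦ (hsub hspan)
    have := slrs_key hΦ l.length l le_rfl hlmem (by rw [hlsum]; exact hnorm)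
    rwa [hlsum] at this
  · intro hv
    exact ⟨hX.2.2.2 v hv, slrs_norm hΦ hv⟩
end

section
/- Every simply laced root system has a base, i.e., a linearly independent subset with nonpositive pairwise inner products between distinct elements, whose integer span contains the whole root system. -/
open RealInnerProductSpace

variable {E : Type*} [NormedAddCommGroup E] [InnerProductSpace ℝ E]

/-- A finite set of vectors of square norm 2 admits a vector not orthogonal to any of them. -/
lemma exists_regular {Φ : Set E} (hfin : Φ.Finite) (h2 : ∀ x ∈ Φ, ⟪x, x⟫ = 2) :
    ∃ v : E, ∀ x ∈ Φ, ⟪v, x⟫ ≠ 0 := by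
  classical
  set s : Finset (Subspace ℝ E) := hfin.toFinset.image (fun x => (ℝ ∙ x)ᗮ) with hs
  have htop : ⊤ ∉ s := by
    intro h
    rw [hs, Finset.mem_image] at h
    obtain ⟨x, hx, hxe⟩ := h
    rw [Set.Finite.mem_toFinset] at hx
    have : x ∈ (ℝ ∙ x)ᗮ := by rw [hxe]; trivial
    rw [Submodule.mem_orthogonal_singleton_iff_inner_right] at this
    rw [h2 x hx] at this; norm_num at this
  have hne := Subspace.biUnion_ne_univ_of_top_notMem htop
  have hex : ∃ v : E, v ∉ ⋃ p ∈ s, (p : Set E) := by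
    by_contra h
    push_neg at h
    exact hne (Set.eq_univ_of_forall h)
  obtain ⟨v, hv⟩ := hex
  refine ⟨v, fun x hx h0 => hv ?_⟩
  rw [Set.mem_iUnion₂]
  refine ⟨(ℝ ∙ x)ᗮ, ?_, ?_⟩
  · rw [hs, Finset.mem_image]; exact ⟨x, (Set.Finite.mem_toFinset _).2 hx, rfl⟩
  · rw [SetLike.mem_coe, Submodule.mem_orthogonal_singleton_iff_inner_left]
    exact h0

/-- A set of vectors lying in an open half-space with pairwise nonpositive inner products
is linearly independent. -/
lemma li_of_obtuse {X : Set E} {v : E}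
    (hv : ∀ x ∈ X, 0 < ⟪v, x⟫)
    (hob : ∀ x ∈ X, ∀ y ∈ X, x ≠ y → ⟪x, y⟫ ≤ 0) :
    LinearIndependent ℝ ((↑) : X → E) := by
  classical
  rw [linearIndependent_iff']
  intro s g hg i hi
  set P := s.filter (fun i => 0 ≤ g i) with hP
  set N := s.filter (fun i => g i < 0) with hN
  have hsum : ∑ j ∈ P, g j • (j : E) + ∑ j ∈ N, g j • (j : E) = 0 := by
    rw [← Finset.sum_filter_add_sum_filter_not s (fun i => 0 ≤ g i)] at hg
    rw [hN]
    convert hg using 3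
    apply Finset.filter_congr
    intro j _
    simp [not_le]
  set u := ∑ j ∈ P, g j • (j : E) with hu
  have hu2 : u = ∑ j ∈ N, (-g j) • (j : E) := by
    have h := eq_neg_of_add_eq_zero_left hsum
    rw [h, ← Finset.sum_neg_distrib]
    exact Finset.sum_congr rfl (fun j _ => (neg_smul _ _).symm)
  have huz : u = 0 := by
    refine real_inner_self_nonpos.mp ?_
    nth_rewrite 2 [hu2]
    rw [hu, sum_inner]
    apply Finset.sum_nonpos
    intro j hj
    rw [inner_sum]
    apply Finset.sum_nonpos
    intro k hk
    rw [real_inner_smul_left, real_inner_smul_right]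
    have h1 : 0 ≤ g j := (Finset.mem_filter.1 hj).2
    have h2 : g k < 0 := (Finset.mem_filter.1 hk).2
    have hne : (j : E) ≠ (k : E) := by
      intro h
      have : j = k := Subtype.coe_injective h
      subst this; linarith
    have h3 : ⟪(j : E), (k : E)⟫ ≤ 0 := hob (j : E) j.2 (k : E) k.2 hne
    have h4 : 0 ≤ -g k := by linarith
    nlinarith [mul_nonneg h1 h4]
  have hvu : ⟪v, u⟫ = 0 := by rw [huz, inner_zero_right]
  have hPz : ∀ j ∈ P, g j = 0 := by
    have h0 : ∑ j ∈ P, g j * ⟪v, (j : E)⟫ = 0 := by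
      rw [hu, inner_sum] at hvu
      simpa [real_inner_smul_right] using hvu
    intro j hj
    have hterm := (Finset.sum_eq_zero_iff_of_nonneg (fun (k : { x // x ∈ X }) hk =>
      mul_nonneg (Finset.mem_filter.1 hk).2 (hv (k : E) k.2).le)).1 h0 j hj
    have := hv (j : E) j.2
    have h1 : 0 ≤ g j := (Finset.mem_filter.1 hj).2
    by_contra hne
    have : 0 < g j * ⟪v, (j : E)⟫ := mul_pos (lt_of_le_of_ne h1 (Ne.symm hne)) this
    linarith [hterm]
  have hNz : ∀ j ∈ N, False := by
    have h0 : ∑ j ∈ N, (-g j) * ⟪v, (j : E)⟫ = 0 := by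
      rw [hu2] at hvu
      rw [inner_sum] at hvu
      simpa [real_inner_smul_right] using hvu
    intro j hj
    have hterm := (Finset.sum_eq_zero_iff_of_nonneg (fun (k : { x // x ∈ X }) hk =>
      mul_nonneg (by linarith [(Finset.mem_filter.1 hk).2] : (0:ℝ) ≤ -g k)
        (hv (k : E) k.2).le)).1 h0 j hj
    have h2 : g j < 0 := (Finset.mem_filter.1 hj).2
    have : 0 < (-g j) * ⟪v, (j : E)⟫ := mul_pos (by linarith) (hv (j : E) j.2)
    linarith [hterm]
  rcases le_or_gt 0 (g i) with h | h
  · exact hPz i (Finset.mem_filter.2 ⟨hi, h⟩)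
  · exact absurd (hNz i (Finset.mem_filter.2 ⟨hi, h⟩)) not_false

theorem exists_base {Φ : Set E} (hΦ : IsSLRS Φ) : ∃ X : Set E, IsBase Φ X := by
  classical
  obtain ⟨hne, hfin, hprop⟩ := hΦ
  have h2 : ∀ x ∈ Φ, ⟪x, x⟫ = 2 := fun x hx => (hprop x hx x hx).1
  have hneg : ∀ x ∈ Φ, -x ∈ Φ := by
    intro x hx
    have h := (hprop x hx x hx).2.2
    rw [h2 x hx] at h
    convert h using 1
    module
  obtain ⟨v, hv⟩ := exists_regular hfin h2
  set P : Set E := {x ∈ Φ | 0 < ⟪v, x⟫} with hPdef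
  have hPsub : P ⊆ Φ := fun x hx => hx.1
  have hPor : ∀ x ∈ Φ, x ∈ P ∨ -x ∈ P := by
    intro x hx
    rcases lt_or_gt_of_ne (hv x hx) with h | h
    · right
      exact ⟨hneg x hx, by rw [inner_neg_right]; linarith⟩
    · left; exact ⟨hx, h⟩
  set X : Set E := {x ∈ P | ¬∃ y ∈ P, ∃ z ∈ P, x = y + z} with hXdef
  have hXP : X ⊆ P := fun x hx => hx.1
  have hsub : ∀ x ∈ Φ, ∀ y ∈ Φ, x ≠ y → 0 < ⟪x, y⟫ → x - y ∈ Φ := by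
    intro x hx y hy hxy hpos
    obtain ⟨m, hm⟩ := (hprop x hx y hy).2.1
    have hm0 : 0 < m := by
      have : (0 : ℝ) < (m : ℝ) := hm ▸ hpos
      exact_mod_cast this
    have hm2 : m < 2 := by
      by_contra hc
      push_neg at hc
      have hcr : (2 : ℝ) ≤ (m : ℝ) := by exact_mod_cast hc
      have h4 : ⟪x - y, x - y⟫ ≤ 0 := by
        rw [real_inner_sub_sub_self, h2 x hx, h2 y hy, hm]
        linarith
      have := real_inner_self_nonpos.mp h4
      rw [sub_eq_zero] at this
      exact hxy this
    have hm1 : ⟪x, y⟫ = 1 := by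
      rw [hm]
      have : m = 1 := by omega
      rw [this]; norm_num
    have h := (hprop x hx y hy).2.2
    rwa [hm1, one_smul] at h
  have hob : ∀ x ∈ X, ∀ y ∈ X, x ≠ y → ⟪x, y⟫ ≤ 0 := by
    intro x hx y hy hxy
    by_contra h
    push_neg at h
    have hxΦ := hPsub hx.1
    have hyΦ := hPsub hy.1
    have hd := hsub x hxΦ y hyΦ hxy h
    rcases hPor (x - y) hd with hcase | hcase
    · exact hx.2 ⟨x - y, hcase, y, hy.1, by abel⟩
    · rw [neg_sub] at hcase
      exact hy.2 ⟨y - x, hcase, x, hx.1, by abel⟩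
  have hvX : ∀ x ∈ X, 0 < ⟪v, x⟫ := fun x hx => hx.1.2
  have hspanP : ∀ x ∈ P, x ∈ Submodule.span ℤ X := by
    by_contra hcon
    push_neg at hcon
    set S : Set E := {x ∈ P | x ∉ Submodule.span ℤ X} with hS
    have hSne : S.Nonempty := by
      obtain ⟨x, hx1, hx2⟩ := hcon
      exact ⟨x, hx1, hx2⟩
    have hSfin : S.Finite := hfin.subset (fun x hx => hx.1.1)
    obtain ⟨x0, hx0S, hmin⟩ := Set.exists_min_image S (fun x => ⟪v, x⟫) hSfin hSne
    have hx0X : x0 ∉ X := fun h => hx0S.2 (Submodule.subset_span h)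
    have hdec : ∃ y ∈ P, ∃ z ∈ P, x0 = y + z := by
      by_contra h
      exact hx0X ⟨hx0S.1, h⟩
    obtain ⟨y, hyP, z, hzP, hyz⟩ := hdec
    have hsplit : ⟪v, x0⟫ = ⟪v, y⟫ + ⟪v, z⟫ := by rw [hyz, inner_add_right]
    have hyspan : y ∈ Submodule.span ℤ X := by
      by_contra hcy
      have := hmin y ⟨hyP, hcy⟩
      linarith [hzP.2]
    have hzspan : z ∈ Submodule.span ℤ X := by
      by_contra hcz
      have := hmin z ⟨hzP, hcz⟩
      linarith [hyP.2]
    exact hx0S.2 (hyz ▸ Submodule.add_mem _ hyspan hzspan)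
  refine ⟨X, fun x hx => hPsub (hXP hx), li_of_obtuse hvX hob, hob, ?_⟩
  intro w hw
  rcases hPor w hw with h | h
  · exact hspanP w h
  · have := hspanP _ h
    simpa using Submodule.neg_mem _ this
end

section
/- Let X be a finite set of vectors in a real inner product space with ‖v‖² = 2 for all v ∈ X and ⟨v,w⟩ ∈ ℤ for all v, w ∈ X, and suppose X is nonempty. Then X̂ = {x in the ℤ-span of X : ‖x‖² = 2} is a simply laced root system. -/
open RealInnerProductSpace

variable {E : Type*} [NormedAddCommGroup E] [InnerProductSpace ℝ E]

theorem hat_isSLRS {X : Set E} (hfin : X.Finite) (hne : X.Nonempty)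
    (hnorm : ∀ v ∈ X, ⟪v, v⟫ = 2)
    (hint : ∀ v ∈ X, ∀ w ∈ X, ∃ m : ℤ, ⟪v, w⟫ = (m : ℝ)) :
    IsSLRS {x : E | x ∈ Submodule.span ℤ X ∧ ⟪x, x⟫ = 2} := by
  classical
  set Φ : Set E := {x : E | x ∈ Submodule.span ℤ X ∧ ⟪x, x⟫ = 2} with hΦ
  -- Step 1: integrality against elements of X
  have hint1 : ∀ w ∈ X, ∀ x ∈ Submodule.span ℤ X, ∃ m : ℤ, ⟪x, w⟫ = (m : ℝ) := by
    intro w hw x hx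
    induction hx using Submodule.span_induction with
    | mem v hv => exact hint v hv w hw
    | zero => exact ⟨0, by simp⟩
    | add a b _ _ ha hb =>
        obtain ⟨m, hm⟩ := ha; obtain ⟨n, hn⟩ := hb
        exact ⟨m + n, by rw [inner_add_left, hm, hn]; push_cast; ring⟩
    | smul n a _ ha =>
        obtain ⟨m, hm⟩ := ha
        refine ⟨n * m, ?_⟩
        rw [← Int.cast_smul_eq_zsmul ℝ n a, real_inner_smul_left, hm]
        push_cast; ring
  -- Step 2: integrality between elements of the span
  have hint2 : ∀ x ∈ Submodule.span ℤ X, ∀ y ∈ Submodule.span ℤ X,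
      ∃ m : ℤ, ⟪x, y⟫ = (m : ℝ) := by
    intro x hx y hy
    induction hy using Submodule.span_induction with
    | mem v hv => exact hint1 v hv x hx
    | zero => exact ⟨0, by simp⟩
    | add a b _ _ ha hb =>
        obtain ⟨m, hm⟩ := ha; obtain ⟨n, hn⟩ := hb
        exact ⟨m + n, by rw [inner_add_right, hm, hn]; push_cast; ring⟩
    | smul n a _ ha =>
        obtain ⟨m, hm⟩ := ha
        refine ⟨n * m, ?_⟩
        rw [← Int.cast_smul_eq_zsmul ℝ n a, real_inner_smul_right, hm]
        push_cast; ring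
  -- ℤ-span is contained in ℝ-span
  have hsub : ∀ x ∈ Submodule.span ℤ X, x ∈ Submodule.span ℝ X := by
    intro x hx
    induction hx using Submodule.span_induction with
    | mem v hv => exact Submodule.subset_span hv
    | zero => exact Submodule.zero_mem _
    | add a b _ _ ha hb => exact Submodule.add_mem _ ha hb
    | smul n a _ ha =>
        rw [← Int.cast_smul_eq_zsmul ℝ n a]
        exact Submodule.smul_mem _ _ ha
  -- Finiteness
  have hXfin : Finite ↥X := hfin.to_subtype
  have hfinΦ : Φ.Finite := by
    set F : E → (↥X → ℝ) := fun x v => ⟪x, (v : E)⟫ with hF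
    have himg : (F '' Φ).Finite := by
      have hS : (Set.pi Set.univ (fun _ : ↥X =>
          (fun m : ℤ => (m : ℝ)) '' Set.Icc (-2 : ℤ) 2)).Finite := by
        apply Set.Finite.pi
        intro _
        exact (Set.finite_Icc _ _).image _
      refine hS.subset ?_
      rintro _ ⟨x, hx, rfl⟩
      intro v _
      obtain ⟨m, hm⟩ := hint1 v v.2 x hx.1
      refine ⟨m, ?_, hm.symm⟩
      have hb := real_inner_mul_inner_self_le x (v : E)
      rw [hx.2, hnorm v v.2, hm] at hb
      have hb' : m * m ≤ 4 := by exact_mod_cast hb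
      constructor <;> nlinarith
    have hinj : Set.InjOn F Φ := by
      intro x hx y hy hxy
      have horth : ∀ z ∈ Submodule.span ℝ X, ⟪x - y, z⟫ = 0 := by
        intro z hz
        induction hz using Submodule.span_induction with
        | mem v hv =>
            have := congrFun hxy ⟨v, hv⟩
            simp only [hF] at this
            rw [inner_sub_left, this, sub_self]
        | zero => simp
        | add a b _ _ ha hb => rw [inner_add_right, ha, hb, add_zero]
        | smul r a _ ha => rw [real_inner_smul_right, ha, mul_zero]
      have h0 : ⟪x - y, x - y⟫ = 0 :=
        horth _ (Submodule.sub_mem _ (hsub x hx.1) (hsub y hy.1))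
      have := inner_self_eq_zero.mp h0
      exact sub_eq_zero.mp this
    exact Set.Finite.of_finite_image himg hinj
  refine ⟨?_, hfinΦ, ?_⟩
  · obtain ⟨v, hv⟩ := hne
    exact ⟨v, Submodule.subset_span hv, hnorm v hv⟩
  · intro x hx y hy
    obtain ⟨m, hm⟩ := hint2 x hx.1 y hy.1
    refine ⟨hx.2, ⟨m, hm⟩, ?_, ?_⟩
    · rw [hm, Int.cast_smul_eq_zsmul ℝ m y]
      exact Submodule.sub_mem _ hx.1 (Submodule.smul_mem _ m hy.1)
    · have hyx : ⟪y, x⟫ = ⟪x, y⟫ := real_inner_comm x y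
      rw [inner_sub_left, inner_sub_right, inner_sub_right,
        real_inner_smul_left, real_inner_smul_right, real_inner_smul_left,
        real_inner_smul_right, hx.2, hy.2, hyx]
      ring
end

section
/- If A is the adjacency matrix of a signed graph whose least eigenvalue is at least -2, then there exist vectors v₁,…,vₙ in a real inner product space with ‖vᵢ‖² = 2 and ⟨vᵢ,vⱼ⟩ ∈ ℤ such that A + 2I is the Gram matrix of (v₁,…,vₙ); consequently {v₁,…,vₙ} is contained in a simply laced root system. -/
open RealInnerProductSpace

variable {E : Type*} [NormedAddCommGroup E] [InnerProductSpace ℝ E]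

theorem signed_graph_gram {n : ℕ} (A : Matrix (Fin n) (Fin n) ℝ)
    (hsym : A.IsSymm) (hdiag : ∀ i, A i i = 0)
    (hentries : ∀ i j, A i j = -1 ∨ A i j = 0 ∨ A i j = 1)
    (hmin : ∀ (μ : ℝ) (x : Fin n → ℝ), x ≠ 0 → A.mulVec x = μ • x → -2 ≤ μ) :
    ∃ v : Fin n → EuclideanSpace ℝ (Fin (n + 1)),
      (∀ i, ⟪v i, v i⟫ = 2) ∧
      (∀ i j, ∃ m : ℤ, ⟪v i, v j⟫ = (m : ℝ)) ∧
      (∀ i j, (A + 2 • (1 : Matrix (Fin n) (Fin n) ℝ)) i j = ⟪v i, v j⟫) ∧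
      ∃ Φ : Set (EuclideanSpace ℝ (Fin (n + 1))), IsSLRS Φ ∧ Set.range v ⊆ Φ := by
  classical
  set M := A + 2 • (1 : Matrix (Fin n) (Fin n) ℝ) with hMdef
  -- M is positive semidefinite
  have hMherm : M.IsHermitian := by
    have : M.transpose = M := by
      simp [hMdef, Matrix.transpose_add, Matrix.transpose_smul, hsym.eq]
    simpa [Matrix.IsHermitian] using this
  have hpsd : M.PosSemidef := by
    apply hMherm.posSemidef_iff_eigenvalues_nonneg.mpr
    intro i
    set x : Fin n → ℝ := ⇑(hMherm.eigenvectorBasis i) with hx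
    have hxne : x ≠ 0 := by
      intro h
      apply hMherm.eigenvectorBasis.orthonormal.ne_zero i
      ext k; exact congrFun h k
    have hMx : M.mulVec x = hMherm.eigenvalues i • x := hMherm.mulVec_eigenvectorBasis i
    have hAx : A.mulVec x = (hMherm.eigenvalues i - 2) • x := by
      have h2 : M.mulVec x = A.mulVec x + (2:ℝ) • x := by
        rw [hMdef, Matrix.add_mulVec, Matrix.smul_mulVec, Matrix.one_mulVec]
        ext k
        simp
      rw [sub_smul, ← hMx, h2]
      abel
    have := hmin _ x hxne hAx
    simp only [Pi.zero_apply]; linarith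
  open scoped MatrixOrder in
  obtain ⟨B, hB⟩ := CStarAlgebra.nonneg_iff_eq_star_mul_self.mp hpsd.nonneg
  -- the vectors
  set v : Fin n → EuclideanSpace ℝ (Fin (n + 1)) :=
    fun i => WithLp.toLp 2 (Fin.snoc (fun k => B k i) 0) with hv
  set e : EuclideanSpace ℝ (Fin (n + 1)) :=
    WithLp.toLp 2 (Fin.snoc (fun _ => 0) (Real.sqrt 2)) with he
  have hinner : ∀ (x y : EuclideanSpace ℝ (Fin (n+1))), ⟪x, y⟫ = ∑ k, x k * y k := by
    intro x y
    simp [PiLp.inner_apply, RCLike.inner_apply, mul_comm]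
  have hgram : ∀ i j, ⟪v i, v j⟫ = M i j := by
    intro i j
    rw [hinner, Fin.sum_univ_castSucc]
    have hentry : M i j = ∑ k, B k i * B k j := by
      rw [hB]
      simp [Matrix.mul_apply, Matrix.conjTranspose_apply]
    simp [hv, Fin.snoc_castSucc, Fin.snoc_last, hentry]
  have hMentry : ∀ i j, M i j = A i j + if i = j then 2 else 0 := by
    intro i j
    have h1 : (2 • (1 : Matrix (Fin n) (Fin n) ℝ)) i j = if i = j then 2 else 0 := by
      rw [Matrix.smul_apply, Matrix.one_apply]
      split <;> simp
    rw [hMdef, Matrix.add_apply, h1]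
  have hnorm : ∀ i, ⟪v i, v i⟫ = 2 := by
    intro i
    rw [hgram, hMentry]
    simp [hdiag i]
  have hintv : ∀ i j, ∃ m : ℤ, ⟪v i, v j⟫ = (m : ℝ) := by
    intro i j
    rw [hgram, hMentry]
    by_cases hij : i = j
    · exact ⟨2, by simp [hij, hdiag j]⟩
    · rcases hentries i j with h | h | h
      exacts [⟨-1, by simp [hij, h]⟩, ⟨0, by simp [hij, h]⟩, ⟨1, by simp [hij, h]⟩]
  -- inner products involving e
  have henorm : ⟪e, e⟫ = 2 := by
    rw [hinner, Fin.sum_univ_castSucc]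
    simp [he, Fin.snoc_castSucc, Fin.snoc_last,
      Real.mul_self_sqrt (by norm_num : (2:ℝ) ≥ 0)]
  have hve : ∀ i, ⟪v i, e⟫ = 0 := by
    intro i
    rw [hinner, Fin.sum_univ_castSucc]
    simp [hv, he, Fin.snoc_castSucc, Fin.snoc_last]
  -- the extended family
  set w : Fin (n + 1) → EuclideanSpace ℝ (Fin (n + 1)) := Fin.snoc v e with hw
  have hwnorm : ∀ i, ⟪w i, w i⟫ = 2 := by
    intro i
    refine Fin.lastCases ?_ ?_ i <;> simp [hw, Fin.snoc_castSucc, Fin.snoc_last, henorm, hnorm,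
      (real_inner_self_eq_norm_sq e).symm.trans henorm,
      fun i => (real_inner_self_eq_norm_sq (v i)).symm.trans (hnorm i)]
  have hwint : ∀ i j, ∃ m : ℤ, ⟪w i, w j⟫ = (m : ℝ) := by
    intro i j
    refine Fin.lastCases ?_ (fun i' => ?_) i
    · refine Fin.lastCases ?_ (fun j' => ?_) j
      · exact ⟨2, by simpa [hw, Fin.snoc_last] using henorm⟩
      · refine ⟨0, ?_⟩
        have h0 : (⟪e, v j'⟫ : ℝ) = 0 := by rw [real_inner_comm]; exact hve j'
        simpa [hw, Fin.snoc_last, Fin.snoc_castSucc] using h0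
    · refine Fin.lastCases ?_ (fun j' => ?_) j
      · exact ⟨0, by simpa [hw, Fin.snoc_last, Fin.snoc_castSucc] using hve i'⟩
      · simpa [hw, Fin.snoc_castSucc] using hintv i' j'
  -- the group generated
  set G : AddSubgroup (EuclideanSpace ℝ (Fin (n + 1))) :=
    AddSubgroup.closure (Set.range w) with hG
  have hwG : ∀ i, w i ∈ G := fun i => AddSubgroup.subset_closure ⟨i, rfl⟩
  have hint1 : ∀ x ∈ G, ∀ j, ∃ m : ℤ, ⟪x, w j⟫ = (m : ℝ) := by
    intro x hx
    induction hx using AddSubgroup.closure_induction with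
    | mem y hy => obtain ⟨i, rfl⟩ := hy; exact hwint i
    | zero => intro j; exact ⟨0, by simp⟩
    | add a b ha hb iha ihb =>
        intro j
        obtain ⟨m1, h1⟩ := iha j
        obtain ⟨m2, h2⟩ := ihb j
        exact ⟨m1 + m2, by rw [inner_add_left, h1, h2]; push_cast; ring⟩
    | neg a ha iha =>
        intro j
        obtain ⟨m1, h1⟩ := iha j
        exact ⟨-m1, by rw [inner_neg_left, h1]; push_cast; ring⟩
  have hint2 : ∀ x ∈ G, ∀ y ∈ G, ∃ m : ℤ, ⟪x, y⟫ = (m : ℝ) := by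
    intro x hx y hy
    induction hy using AddSubgroup.closure_induction with
    | mem z hz => obtain ⟨j, rfl⟩ := hz; exact hint1 x hx j
    | zero => exact ⟨0, by simp⟩
    | add a b ha hb iha ihb =>
        obtain ⟨m1, h1⟩ := iha
        obtain ⟨m2, h2⟩ := ihb
        exact ⟨m1 + m2, by rw [inner_add_right, h1, h2]; push_cast; ring⟩
    | neg a ha iha =>
        obtain ⟨m1, h1⟩ := iha
        exact ⟨-m1, by rw [inner_neg_right, h1]; push_cast; ring⟩
  have hspan : ∀ x ∈ G, x ∈ Submodule.span ℝ (Set.range w) := by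
    intro x hx
    induction hx using AddSubgroup.closure_induction with
    | mem y hy => exact Submodule.subset_span hy
    | zero => exact Submodule.zero_mem _
    | add a b ha hb iha ihb => exact Submodule.add_mem _ iha ihb
    | neg a ha iha => exact Submodule.neg_mem _ iha
  -- the root system
  set Φ : Set (EuclideanSpace ℝ (Fin (n + 1))) := {x | x ∈ G ∧ ⟪x, x⟫ = 2} with hΦ
  have hwΦ : ∀ i, w i ∈ Φ := fun i => ⟨hwG i, hwnorm i⟩
  have hΦfin : Φ.Finite := by
    set f : EuclideanSpace ℝ (Fin (n + 1)) → (Fin (n + 1) → ℝ) :=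
      fun x k => ⟪x, w k⟫ with hf
    have himg : f '' Φ ⊆ Set.pi Set.univ (fun _ => ((↑) : ℤ → ℝ) '' (Set.Icc (-2) 2)) := by
      rintro _ ⟨x, ⟨hxG, hxn⟩, rfl⟩ k -
      obtain ⟨m, hm⟩ := hint2 x hxG (w k) (hwG k)
      refine ⟨m, ?_, hm.symm⟩
      have hb : |⟪x, w k⟫| ≤ ‖x‖ * ‖w k‖ := abs_real_inner_le_norm x (w k)
      have hxn' : ‖x‖ * ‖x‖ = 2 := by rw [← real_inner_self_eq_norm_mul_norm]; exact hxn
      have hwn' : ‖w k‖ * ‖w k‖ = 2 := by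
        rw [← real_inner_self_eq_norm_mul_norm]; exact hwnorm k
      have hxs : ‖x‖ = Real.sqrt 2 := by
        rw [show (2:ℝ) = ‖x‖ * ‖x‖ from hxn'.symm, Real.sqrt_mul_self (norm_nonneg x)]
      have hws : ‖w k‖ = Real.sqrt 2 := by
        rw [show (2:ℝ) = ‖w k‖ * ‖w k‖ from hwn'.symm, Real.sqrt_mul_self (norm_nonneg (w k))]
      have h2 : ‖x‖ * ‖w k‖ = 2 := by
        rw [hxs, hws, Real.mul_self_sqrt (by norm_num : (0:ℝ) ≤ 2)]
      rw [h2, hm] at hb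
      have := abs_le.mp hb
      constructor <;> [exact_mod_cast this.1; exact_mod_cast this.2]
    have hinj : Set.InjOn f Φ := by
      rintro x ⟨hxG, -⟩ y ⟨hyG, -⟩ hxy
      have hperp : ∀ z ∈ Submodule.span ℝ (Set.range w), ⟪x - y, z⟫ = 0 := by
        intro z hz
        induction hz using Submodule.span_induction with
        | mem z hz =>
            obtain ⟨k, rfl⟩ := hz
            have := congrFun hxy k
            simp only [hf] at this
            rw [inner_sub_left, this, sub_self]
        | zero => simp
        | add a b ha hb iha ihb => rw [inner_add_right, iha, ihb, add_zero]
        | smul c a ha iha => rw [inner_smul_right, iha, mul_zero]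
      have hxy' : x - y ∈ Submodule.span ℝ (Set.range w) :=
        Submodule.sub_mem _ (hspan x hxG) (hspan y hyG)
      have := hperp _ hxy'
      rw [inner_self_eq_zero] at this
      exact sub_eq_zero.mp this
    exact Set.Finite.of_finite_image
      ((Set.Finite.pi fun _ => (Set.finite_Icc (-2:ℤ) 2).image _).subset himg) hinj
  refine ⟨v, hnorm, hintv, fun i j => (hgram i j).symm, Φ, ⟨⟨e, ?_⟩, hΦfin, ?_⟩, ?_⟩
  · simpa [hw, Fin.snoc_last] using hwΦ (Fin.last n)
  · rintro x ⟨hxG, hxn⟩ y ⟨hyG, hyn⟩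
    obtain ⟨m, hm⟩ := hint2 x hxG y hyG
    refine ⟨hxn, ⟨m, hm⟩, ?_, ?_⟩
    · rw [hm, Int.cast_smul_eq_zsmul]
      exact AddSubgroup.sub_mem G hxG (AddSubgroup.zsmul_mem G hyG m)
    · simp only [inner_sub_left, inner_sub_right, real_inner_smul_left, real_inner_smul_right]
      have hm2 : (⟪y, x⟫ : ℝ) = (m : ℝ) := by rw [real_inner_comm]; exact hm
      rw [hxn, hyn, hm, hm2]
      ring
  · rintro z ⟨i, rfl⟩
    simpa [hw, Fin.snoc_castSucc] using hwΦ i.castSucc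
end
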